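/- (Margulis–Russo Lemma) Let f : {0,1}^k → {0,1} be monotone. Then the derivative with respect to p of E_{x ~ Bernoulli(p)^k}[f(x)] equals ∑_{i=1}^k Pr_{x ~ Bernoulli(p)^k}[f(x \ i) = 0 ∧ f(x ∪ i) = 1], where x \ i sets the i-th coordinate to 0 and x ∪ i sets it to 1. -/

import Mathlib

open Finset

/-- Hamming weight of `x : Fin k → Bool`. -/
def hw {k : ℕ} (x : Fin k → Bool) : ℕ := (univ.filter fun i => x i = true).card

lemma hw_lt {k : ℕ} (x : Fin k → Bool) {i : Fin k} (hx : x i = false) : hw x < k := by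
  have h1 : (univ.filter fun j => x j = true) ⊂ univ := by
    refine Finset.ssubset_univ_iff.mpr ?_
    intro h
    have hi := Finset.mem_univ i
    rw [← h] at hi
    have : x i = true := (Finset.mem_filter.mp hi).2
    simp [hx] at this
  have := Finset.card_lt_card h1
  simpa [hw] using this

lemma hw_update_true {k : ℕ} (x : Fin k → Bool) (i : Fin k) (hx : x i = false) :
    hw (Function.update x i true) = hw x + 1 := by
  have h : (univ.filter fun j => Function.update x i true j = true)
      = insert i (univ.filter fun j => x j = true) := by
    ext j
    by_cases h : j = i
    · subst h; simp
    · simp [Function.update_of_ne h, h]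
  rw [hw, h, Finset.card_insert_of_notMem (by simp [hx]), hw]

lemma sum_split {k : ℕ} (i : Fin k) (h : (Fin k → Bool) → ℝ) :
    ∑ x, h x = ∑ x ∈ univ.filter (fun x => x i = false),
      (h x + h (Function.update x i true)) := by
  rw [Finset.sum_add_distrib,
    ← Finset.sum_filter_add_sum_filter_not univ (fun x => x i = false) h]
  congr 1
  refine Finset.sum_nbij' (i := fun x => Function.update x i false)
    (j := fun x => Function.update x i true) ?_ ?_ ?_ ?_ ?_
  · intro a ha; simp
  · intro a ha; simp at ha ⊢; try simp [ha]
  · intro a ha; simp at ha; funext j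
    by_cases hj : j = i
    · subst hj; simp [ha]
    · simp [Function.update_of_ne hj]
  · intro a ha; simp at ha; funext j
    by_cases hj : j = i
    · subst hj; simp [ha]
    · simp [Function.update_of_ne hj]
  · intro a ha
    simp at ha
    congr 1
    funext j
    by_cases hj : j = i
    · subst hj; simp [ha]
    · simp [Function.update_of_ne hj]

lemma key {k : ℕ} (f : (Fin k → Bool) → Bool)
    (hmono : ∀ x y : Fin k → Bool, (∀ i, x i ≤ y i) → f x ≤ f y) (p : ℝ) (i : Fin k) :
    ∑ x : Fin k → Bool,
      ((if x i = true then (1:ℝ) else 0) * (if f x = true then (1:ℝ) else 0)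
          * p ^ (hw x - 1) * (1-p) ^ (k - hw x)
        - (if x i = true then (0:ℝ) else 1) * (if f x = true then (1:ℝ) else 0)
          * p ^ hw x * (1-p) ^ (k - hw x - 1))
    = ∑ x : Fin k → Bool,
      (if f (Function.update x i false) = false ∧ f (Function.update x i true) = true
        then (1:ℝ) else 0) * p ^ hw x * (1-p) ^ (k - hw x) := by
  rw [sum_split i, sum_split i]
  apply Finset.sum_congr rfl
  intro x hx
  simp only [Finset.mem_filter, Finset.mem_univ, true_and] at hx
  set z := Function.update x i true with hz
  have hzi : z i = true := by simp [hz]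
  have hxx : Function.update x i false = x := by
    rw [← hx]; exact Function.update_eq_self i x
  have hzx : Function.update z i false = x := by
    rw [hz]; funext j
    by_cases hj : j = i
    · subst hj; simp [hx]
    · simp [Function.update_of_ne hj]
  have hzz : Function.update z i true = z := by
    rw [hz]; simp
  have hwz : hw z = hw x + 1 := hw_update_true x i hx
  have hlt : hw x < k := hw_lt x hx
  have hle : f x ≤ f z := by
    apply hmono
    intro j
    by_cases hj : j = i
    · subst hj; rw [hx]; exact Bool.false_le _
    · rw [hz, Function.update_of_ne hj]
  obtain ⟨b, hb⟩ : ∃ b, k - hw x = b + 1 := ⟨k - hw x - 1, by omega⟩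
  have e1 : k - (hw x + 1) = b := by omega
  have e2 : hw x + 1 - 1 = hw x := by omega
  have e3 : k - hw x - 1 = b := by omega
  rw [hxx, hzx, hzz, hwz, hx, hzi, e1, e2, e3, hb, pow_succ, pow_succ]
  cases hfx : f x <;> cases hfz : f z
  · simp
  · simp; ring
  · exfalso; rw [hfx, hfz] at hle; exact absurd hle (by simp)
  · simp

lemma hw_le {k : ℕ} (x : Fin k → Bool) : hw x ≤ k := by
  simpa [hw] using Finset.card_filter_le univ (fun i => x i = true)

lemma per_x {ι : Type*} (s : Finset ι) (c P Q P' Q' : ℝ) (a b : ι → ℝ) :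
    c * ((∑ i ∈ s, a i) * P) * Q + c * P' * ((∑ i ∈ s, b i) * Q' * (-1))
    = ∑ i ∈ s, (a i * c * P * Q - b i * c * P' * Q') := by
  have h1 : ∀ i ∈ s, a i * c * P * Q - b i * c * P' * Q'
      = a i * (c * P * Q) + b i * (-(c * P' * Q')) := fun i _ => by ring
  rw [Finset.sum_congr rfl h1, Finset.sum_add_distrib, ← Finset.sum_mul, ← Finset.sum_mul]
  ring

/-- Margulis–Russo lemma. -/
theorem margulis_russo {k : ℕ} (f : (Fin k → Bool) → Bool)
    (hmono : ∀ x y : Fin k → Bool, (∀ i, x i ≤ y i) → f x ≤ f y) (p : ℝ) :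
    HasDerivAt
      (fun q : ℝ => ∑ x : Fin k → Bool,
        (if f x = true then (1 : ℝ) else 0) * q ^ hw x * (1 - q) ^ (k - hw x))
      (∑ i : Fin k, ∑ x : Fin k → Bool,
        (if f (Function.update x i false) = false ∧ f (Function.update x i true) = true
          then (1 : ℝ) else 0) * p ^ hw x * (1 - p) ^ (k - hw x))
      p := by
  have hderiv : HasDerivAt
      (fun q : ℝ => ∑ x : Fin k → Bool,
        (if f x = true then (1 : ℝ) else 0) * q ^ hw x * (1 - q) ^ (k - hw x))
      (∑ x : Fin k → Bool,
        ((if f x = true then (1:ℝ) else 0) * (((hw x : ℕ):ℝ) * p ^ (hw x - 1)) * (1-p) ^ (k - hw x)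
          + (if f x = true then (1:ℝ) else 0) * p ^ hw x
            * (((k - hw x : ℕ) : ℝ) * (1-p) ^ (k - hw x - 1) * (-1)))) p := by
    apply HasDerivAt.fun_sum
    intro x _
    have h1 : HasDerivAt (fun q : ℝ => (if f x = true then (1:ℝ) else 0) * q ^ hw x)
        ((if f x = true then (1:ℝ) else 0) * (((hw x : ℕ):ℝ) * p ^ (hw x - 1))) p :=
      (hasDerivAt_pow (hw x) p).const_mul _
    have h2 : HasDerivAt (fun q : ℝ => (1 - q) ^ (k - hw x))
        (((k - hw x : ℕ):ℝ) * (1-p) ^ (k - hw x - 1) * (-1)) p := by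
      have := (((hasDerivAt_id p).const_sub 1).fun_pow (k - hw x))
      simpa using this
    exact h1.mul h2
  have heq : (∑ x : Fin k → Bool,
        ((if f x = true then (1:ℝ) else 0) * (((hw x : ℕ):ℝ) * p ^ (hw x - 1)) * (1-p) ^ (k - hw x)
          + (if f x = true then (1:ℝ) else 0) * p ^ hw x
            * (((k - hw x : ℕ) : ℝ) * (1-p) ^ (k - hw x - 1) * (-1))))
      = ∑ i : Fin k, ∑ x : Fin k → Bool,
        (if f (Function.update x i false) = false ∧ f (Function.update x i true) = true
          then (1 : ℝ) else 0) * p ^ hw x * (1 - p) ^ (k - hw x) := by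
    calc (∑ x : Fin k → Bool,
        ((if f x = true then (1:ℝ) else 0) * (((hw x : ℕ):ℝ) * p ^ (hw x - 1)) * (1-p) ^ (k - hw x)
          + (if f x = true then (1:ℝ) else 0) * p ^ hw x
            * (((k - hw x : ℕ) : ℝ) * (1-p) ^ (k - hw x - 1) * (-1))))
        = ∑ x : Fin k → Bool, ∑ i : Fin k,
            ((if x i = true then (1:ℝ) else 0) * (if f x = true then (1:ℝ) else 0)
                * p ^ (hw x - 1) * (1-p) ^ (k - hw x)
              - (if x i = true then (0:ℝ) else 1) * (if f x = true then (1:ℝ) else 0)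
                * p ^ hw x * (1-p) ^ (k - hw x - 1)) := by
          apply Finset.sum_congr rfl
          intro x _
          have hn : ((hw x : ℕ) : ℝ) = ∑ i : Fin k, if x i = true then (1:ℝ) else 0 := by
            rw [hw, ← Finset.sum_boole]
          have hm : ((k - hw x : ℕ) : ℝ) = ∑ i : Fin k, if x i = true then (0:ℝ) else 1 := by
            have h1 : ∀ i : Fin k, (if x i = true then (0:ℝ) else 1)
                = 1 - (if x i = true then (1:ℝ) else 0) := by
              intro i; by_cases h : x i = true <;> simp [h]
            simp_rw [h1]
            rw [Finset.sum_sub_distrib, Finset.sum_const, Finset.sum_boole,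
              Nat.cast_sub (hw_le x)]
            simp [hw]
          rw [hn, hm, per_x]
      _ = ∑ i : Fin k, ∑ x : Fin k → Bool,
            ((if x i = true then (1:ℝ) else 0) * (if f x = true then (1:ℝ) else 0)
                * p ^ (hw x - 1) * (1-p) ^ (k - hw x)
              - (if x i = true then (0:ℝ) else 1) * (if f x = true then (1:ℝ) else 0)
                * p ^ hw x * (1-p) ^ (k - hw x - 1)) := Finset.sum_comm
      _ = _ := Finset.sum_congr rfl fun i _ => key f hmono p i
  exact heq ▸ hderiv
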